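/- Let P be a finite set of points in ℝ² colored with 2k colors, all used. Then the MinMax color-spanning matching value equals the minimum, over all perfect matchings μ of the 2k colors, of the maximum over matched color pairs {i,j} ∈ μ of the bichromatic closest-pair distance between colors i and j. -/
import Mathlib


open scoped Classical

noncomputable section

abbrev Pt := EuclideanSpace ℝ (Fin 2)

/-- A color-spanning matching of a `2*k`-colored point set `P`: `k` edges whose
`2*k` endpoints lie in `P` and have pairwise distinct colors (hence the
endpoints are pairwise distinct and all `2*k` colors are used). -/
structure CSM (k : ℕ) (P : Finset Pt) (color : Pt → Fin (2*k)) where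
  e : Fin k → Pt × Pt
  mem1 : ∀ i, (e i).1 ∈ P
  mem2 : ∀ i, (e i).2 ∈ P
  colorInj : Function.Injective
    (fun x : Fin k × Bool => color (if x.2 then (e x.1).1 else (e x.1).2))

def CSM.weight {k : ℕ} {P : Finset Pt} {color : Pt → Fin (2*k)}
    (M : CSM k P color) : ℝ :=
  ∑ i, dist (M.e i).1 (M.e i).2

def CSM.minEdge {k : ℕ} (hk : 0 < k) {P : Finset Pt} {color : Pt → Fin (2*k)}
    (M : CSM k P color) : ℝ :=
  Finset.univ.inf' ⟨⟨0, hk⟩, Finset.mem_univ _⟩ fun i => dist (M.e i).1 (M.e i).2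

def CSM.maxEdge {k : ℕ} (hk : 0 < k) {P : Finset Pt} {color : Pt → Fin (2*k)}
    (M : CSM k P color) : ℝ :=
  Finset.univ.sup' ⟨⟨0, hk⟩, Finset.mem_univ _⟩ fun i => dist (M.e i).1 (M.e i).2

/-- The bichromatic farthest-pair distance between colors `c` and `d`. -/
def farDist {k : ℕ} (P : Finset Pt) (color : Pt → Fin (2*k)) (c d : Fin (2*k)) : ℝ :=
  sSup {r : ℝ | ∃ p ∈ P, ∃ q ∈ P, color p = c ∧ color q = d ∧ dist p q = r}

/-- The bichromatic closest-pair distance between colors `c` and `d`. -/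
def closeDist {k : ℕ} (P : Finset Pt) (color : Pt → Fin (2*k)) (c d : Fin (2*k)) : ℝ :=
  sInf {r : ℝ | ∃ p ∈ P, ∃ q ∈ P, color p = c ∧ color q = d ∧ dist p q = r}

/-- A perfect matching of the `2*k` colors: `k` unordered pairs (encoded as
ordered pairs) whose endpoints enumerate all `2*k` colors without repetition. -/
def IsColorPM (k : ℕ) (μ : Fin k → Fin (2*k) × Fin (2*k)) : Prop :=
  Function.Injective (fun x : Fin k × Bool =>
    if x.2 then (μ x.1).1 else (μ x.1).2)

lemma closeSet_finite {k : ℕ} (P : Finset Pt) (color : Pt → Fin (2*k)) (c d : Fin (2*k)) :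
    {r : ℝ | ∃ p ∈ P, ∃ q ∈ P, color p = c ∧ color q = d ∧ dist p q = r}.Finite := by
  apply Set.Finite.subset ((P.finite_toSet.prod P.finite_toSet).image
    (fun pq : Pt × Pt => dist pq.1 pq.2))
  rintro r ⟨p, hp, q, hq, _, _, rfl⟩
  exact ⟨(p, q), ⟨hp, hq⟩, rfl⟩

lemma closeSet_nonempty {k : ℕ} (P : Finset Pt) (color : Pt → Fin (2*k)) (c d : Fin (2*k))
    (hsurj : ∀ c : Fin (2*k), ∃ p ∈ P, color p = c) :
    {r : ℝ | ∃ p ∈ P, ∃ q ∈ P, color p = c ∧ color q = d ∧ dist p q = r}.Nonempty := by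
  obtain ⟨p, hp, hpc⟩ := hsurj c
  obtain ⟨q, hq, hqd⟩ := hsurj d
  exact ⟨dist p q, p, hp, q, hq, hpc, hqd, rfl⟩

lemma closeDist_le {k : ℕ} (P : Finset Pt) (color : Pt → Fin (2*k)) {c d : Fin (2*k)}
    {p q : Pt} (hp : p ∈ P) (hq : q ∈ P) (hpc : color p = c) (hqd : color q = d) :
    closeDist P color c d ≤ dist p q :=
  csInf_le (closeSet_finite P color c d).bddBelow ⟨p, hp, q, hq, hpc, hqd, rfl⟩

lemma closeDist_mem {k : ℕ} (P : Finset Pt) (color : Pt → Fin (2*k)) (c d : Fin (2*k))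
    (hsurj : ∀ c : Fin (2*k), ∃ p ∈ P, color p = c) :
    ∃ p ∈ P, ∃ q ∈ P, color p = c ∧ color q = d ∧ dist p q = closeDist P color c d :=
  (closeSet_nonempty P color c d hsurj).csInf_mem (closeSet_finite P color c d)

lemma closeDist_nonneg {k : ℕ} (P : Finset Pt) (color : Pt → Fin (2*k)) (c d : Fin (2*k)) :
    0 ≤ closeDist P color c d := by
  apply Real.sInf_nonneg
  rintro r ⟨p, _, q, _, _, _, rfl⟩
  exact dist_nonneg

/-- From a color perfect matching, build a CSM realizing the closest distances. -/
lemma csm_of_colorPM {k : ℕ} (P : Finset Pt) (color : Pt → Fin (2*k))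
    (hsurj : ∀ c : Fin (2*k), ∃ p ∈ P, color p = c)
    (μ : Fin k → Fin (2*k) × Fin (2*k)) (hμ : IsColorPM k μ) :
    ∃ M : CSM k P color, ∀ i, dist (M.e i).1 (M.e i).2 = closeDist P color (μ i).1 (μ i).2 := by
  choose p hp q hq hpc hqd hd using fun i => closeDist_mem P color (μ i).1 (μ i).2 hsurj
  refine ⟨⟨fun i => (p i, q i), hp, hq, ?_⟩, hd⟩
  have : (fun x : Fin k × Bool =>
      color (if x.2 then ((fun i => (p i, q i)) x.1).1 else ((fun i => (p i, q i)) x.1).2)) =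
      (fun x : Fin k × Bool => if x.2 then (μ x.1).1 else (μ x.1).2) := by
    funext x
    cases x.2 <;> simp [hpc, hqd]
  rw [this]
  exact hμ

lemma exists_colorPM (k : ℕ) : ∃ μ : Fin k → Fin (2*k) × Fin (2*k), IsColorPM k μ := by
  refine ⟨fun i => (⟨2*i.val, by omega⟩, ⟨2*i.val+1, by omega⟩), ?_⟩
  rintro ⟨i, b⟩ ⟨j, c⟩ h
  simp only at h
  cases b <;> cases c <;> simp_all <;> first | exact Fin.ext h | omega

/-- The MinMax color-spanning matching value equals the minimum, over perfect
matchings `μ` of the `2*k` colors, of the maximum over matched color pairs of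
the bichromatic closest-pair distance. -/
theorem minmax_eq_min_over_colorPM
    (k : ℕ) (hk : 0 < k) (P : Finset Pt) (color : Pt → Fin (2*k))
    (hsurj : ∀ c : Fin (2*k), ∃ p ∈ P, color p = c) :
    sInf {r : ℝ | ∃ M : CSM k P color, r = M.maxEdge hk} =
    sInf {r : ℝ | ∃ μ : Fin k → Fin (2*k) × Fin (2*k), IsColorPM k μ ∧
        r = Finset.univ.sup' ⟨⟨0, hk⟩, Finset.mem_univ _⟩
              (fun i => closeDist P color (μ i).1 (μ i).2)} := by
  set S := {r : ℝ | ∃ M : CSM k P color, r = M.maxEdge hk} with hS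
  set T := {r : ℝ | ∃ μ : Fin k → Fin (2*k) × Fin (2*k), IsColorPM k μ ∧
      r = Finset.univ.sup' ⟨⟨0, hk⟩, Finset.mem_univ _⟩
            (fun i => closeDist P color (μ i).1 (μ i).2)} with hT
  have hTne : T.Nonempty := by
    obtain ⟨μ, hμ⟩ := exists_colorPM k
    exact ⟨_, μ, hμ, rfl⟩
  have hSne : S.Nonempty := by
    obtain ⟨μ, hμ⟩ := exists_colorPM k
    obtain ⟨M, _⟩ := csm_of_colorPM P color hsurj μ hμ
    exact ⟨_, M, rfl⟩
  have hSbdd : BddBelow S := by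
    refine ⟨0, ?_⟩
    rintro r ⟨M, rfl⟩
    have h := Finset.le_sup' (fun i : Fin k => dist (M.e i).1 (M.e i).2)
      (Finset.mem_univ (⟨0, hk⟩ : Fin k))
    exact le_trans dist_nonneg h
  have hTbdd : BddBelow T := by
    refine ⟨0, ?_⟩
    rintro r ⟨μ, hμ, rfl⟩
    have h := Finset.le_sup' (fun i : Fin k => closeDist P color (μ i).1 (μ i).2)
      (Finset.mem_univ (⟨0, hk⟩ : Fin k))
    exact le_trans (closeDist_nonneg P color _ _) h
  apply le_antisymm
  · -- sInf S ≤ sInf T : every T value is an S value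
    apply csInf_le_csInf hSbdd hTne
    rintro r ⟨μ, hμ, rfl⟩
    obtain ⟨M, hM⟩ := csm_of_colorPM P color hsurj μ hμ
    refine ⟨M, ?_⟩
    unfold CSM.maxEdge
    congr 1
    funext i
    exact (hM i).symm
  · -- sInf T ≤ sInf S
    apply le_csInf hSne
    rintro r ⟨M, rfl⟩
    have hμ : IsColorPM k (fun i => (color (M.e i).1, color (M.e i).2)) := by
      have := M.colorInj
      unfold IsColorPM
      convert this using 1
      funext x
      cases x.2 <;> simp
    refine le_trans (csInf_le hTbdd ⟨_, hμ, rfl⟩) ?_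
    apply Finset.sup'_le
    intro i _
    refine le_trans (closeDist_le P color (M.mem1 i) (M.mem2 i) rfl rfl) ?_
    exact Finset.le_sup' (fun j => dist (M.e j).1 (M.e j).2) (Finset.mem_univ i)

end
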